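/- For all positive integers n and all positive reals k, ∏_{j=1}^{n} (1 + k/j) ≤ (k+1)·n^k. -/

import Mathlib

lemma key_step (n : ℕ) (hn : 1 ≤ n) (k : ℝ) (hk : 0 < k) :
    (1 + k / ((n : ℝ) + 1)) * (n : ℝ) ^ k ≤ ((n : ℝ) + 1) ^ k := by
  have hn1 : (1 : ℝ) ≤ (n : ℝ) := by exact_mod_cast hn
  have hnpos : (0 : ℝ) < (n : ℝ) := by linarith
  have hn1pos : (0 : ℝ) < (n : ℝ) + 1 := by linarith
  rcases le_total k 1 with hk1 | hk1
  · -- use (1 - 1/(n+1))^k ≤ 1 - k/(n+1)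
    have hb := rpow_one_add_le_one_add_mul_self (s := -(1 / ((n:ℝ) + 1)))
      (by rw [neg_le, neg_neg]; rw [div_le_one hn1pos]; linarith) hk.le hk1
    have heq : (1 : ℝ) + -(1 / ((n:ℝ) + 1)) = (n : ℝ) / ((n:ℝ) + 1) := by
      field_simp
      ring
    rw [heq] at hb
    have hpow : (n : ℝ) ^ k ≤ (1 + k * -(1 / ((n:ℝ) + 1))) * ((n:ℝ) + 1) ^ k := by
      have := mul_le_mul_of_nonneg_right hb (Real.rpow_nonneg hn1pos.le k)
      rwa [Real.div_rpow hnpos.le hn1pos.le,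
        div_mul_cancel₀ _ (Real.rpow_pos_of_pos hn1pos k).ne'] at this
    have h1 : (0:ℝ) < 1 + k / ((n:ℝ) + 1) := by positivity
    calc (1 + k / ((n : ℝ) + 1)) * (n : ℝ) ^ k
        ≤ (1 + k / ((n:ℝ) + 1)) * ((1 + k * -(1 / ((n:ℝ) + 1))) * ((n:ℝ) + 1) ^ k) :=
          mul_le_mul_of_nonneg_left hpow h1.le
      _ ≤ ((n : ℝ) + 1) ^ k := by
          rw [← mul_assoc]
          have hfac : (1 + k / ((n:ℝ) + 1)) * (1 + k * -(1 / ((n:ℝ) + 1))) ≤ 1 := by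
            have h2 : (1 + k / ((n:ℝ) + 1)) * (1 + k * -(1 / ((n:ℝ) + 1)))
                = 1 - (k / ((n:ℝ)+1))^2 := by field_simp; ring
            rw [h2]; nlinarith [sq_nonneg (k / ((n:ℝ)+1))]
          nlinarith [Real.rpow_pos_of_pos hn1pos k, hfac]
  · -- k ≥ 1: Bernoulli
    have hb := one_add_mul_self_le_rpow_one_add (s := 1 / (n:ℝ))
      (by have : (0:ℝ) ≤ 1 / (n:ℝ) := by positivity
          linarith) hk1
    have h1 : 1 + k / ((n:ℝ) + 1) ≤ 1 + k * (1 / (n:ℝ)) := by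
      rw [mul_one_div]
      gcongr
      linarith
    have heq : ((1 : ℝ) + 1 / (n:ℝ)) ^ k * (n:ℝ) ^ k = ((n:ℝ) + 1) ^ k := by
      rw [← Real.mul_rpow (by positivity) hnpos.le]
      congr 1
      field_simp
    calc (1 + k / ((n : ℝ) + 1)) * (n : ℝ) ^ k
        ≤ (1 + 1 / (n:ℝ)) ^ k * (n:ℝ) ^ k := by
          apply mul_le_mul_of_nonneg_right _ (Real.rpow_nonneg hnpos.le k)
          exact h1.trans hb
      _ = ((n : ℝ) + 1) ^ k := heq

theorem prod_one_add_div_le (n : ℕ) (hn : 1 ≤ n) (k : ℝ) (hk : 0 < k) :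
    ∏ j ∈ Finset.Icc 1 n, (1 + k / (j : ℝ)) ≤ (k + 1) * (n : ℝ) ^ k := by
  induction n with
  | zero => omega
  | succ m ih =>
    rcases Nat.eq_or_lt_of_le hn with h1 | h1
    · simp [← h1]
      linarith
    · have hm : 1 ≤ m := by omega
      rw [Finset.prod_Icc_succ_top (by omega)]
      have hstep := key_step m hm k hk
      have hprodpos : ∀ j ∈ Finset.Icc 1 m, (0:ℝ) ≤ 1 + k / (j:ℝ) := by
        intro j hj
        simp only [Finset.mem_Icc] at hj
        have : (0:ℝ) < j := by exact_mod_cast hj.1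
        positivity
      have h2 : (0:ℝ) < 1 + k / ((m:ℝ) + 1) := by positivity
      calc (∏ j ∈ Finset.Icc 1 m, (1 + k / (j : ℝ))) * (1 + k / ((m+1 : ℕ) : ℝ))
          ≤ ((k + 1) * (m : ℝ) ^ k) * (1 + k / ((m:ℝ) + 1)) := by
            push_cast
            exact mul_le_mul_of_nonneg_right (ih hm) h2.le
        _ = (k + 1) * ((1 + k / ((m:ℝ) + 1)) * (m : ℝ) ^ k) := by ring
        _ ≤ (k + 1) * ((m:ℝ) + 1) ^ k := by
            apply mul_le_mul_of_nonneg_left hstep (by linarith)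
        _ = (k + 1) * ((m+1 : ℕ) : ℝ) ^ k := by push_cast; ring
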